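/- For any integer n ≥ 1, m*(n, d=3, k=2) = min{m : C(m,2) − K(m,2,3,1) ≥ n}, where K(m,2,3,1) is the minimum number of weight-2 binary vectors of length m such that every weight-3 vector of length m is at Hamming distance at most 1 from one of them. In particular, a set of weight-2 columns of length m is 3-decodable if and only if for every 3-subset {i,j,l} of coordinates, not all three vectors e_i+e_j, e_i+e_l, e_j+e_l are among the columns. -/

import Mathlib

/-- Hamming weight of a binary vector. -/
def wt {m : ℕ} (v : Fin m → Bool) : ℕ :=
  (Finset.univ.filter (fun i => v i = true)).card

/-- Hamming distance between two binary vectors. -/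
def hamDist {m : ℕ} (v w : Fin m → Bool) : ℕ :=
  (Finset.univ.filter (fun i => v i ≠ w i)).card

/-- `K(m,2,3,1)`: the minimum number of weight-2 binary vectors of length `m`
such that every weight-3 vector of length `m` is at Hamming distance at most 1
from one of them. -/
noncomputable def turanK (m : ℕ) : ℕ :=
  sInf {c | ∃ A : Finset (Fin m → Bool), A.card = c ∧ (∀ v ∈ A, wt v = 2) ∧
    ∀ w : Fin m → Bool, wt w = 3 → ∃ v ∈ A, hamDist v w ≤ 1}

/-- `M` is `d`-decodable: every nonempty set of at most `d` columns contains a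
row of weight exactly one. -/
def IsDecodable {m n : ℕ} (M : Fin m → Fin n → Bool) (d : ℕ) : Prop :=
  ∀ S : Finset (Fin n), S.Nonempty → S.card ≤ d →
    ∃ i : Fin m, (S.filter (fun j => M i j = true)).card = 1

/-- `M` is `(d,k)`-decodable: `d`-decodable and every column has weight exactly `k`. -/
def IsDecodableK {m n : ℕ} (M : Fin m → Fin n → Bool) (d k : ℕ) : Prop :=
  IsDecodable M d ∧ ∀ j, (Finset.univ.filter (fun i => M i j = true)).card = k

/-- `m*(n,d,k)`: minimum number of rows of a `(d,k)`-decodable matrix with `n` columns. -/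
noncomputable def mStarK (n d k : ℕ) : ℕ :=
  sInf {m | ∃ M : Fin m → Fin n → Bool, IsDecodableK M d k}

/-- The weight-2 vector with ones exactly at coordinates `a` and `b`. -/
def pairVec {m : ℕ} (a b : Fin m) : Fin m → Bool :=
  fun x => decide (x = a) || decide (x = b)

open Finset

def supp {m : ℕ} (v : Fin m → Bool) : Finset (Fin m) := univ.filter (fun i => v i = true)

lemma mem_supp {m : ℕ} (v : Fin m → Bool) (i : Fin m) : i ∈ supp v ↔ v i = true := by
  simp [supp]

lemma wt_eq {m : ℕ} (v : Fin m → Bool) : wt v = (supp v).card := rfl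

lemma supp_inj {m : ℕ} {v w : Fin m → Bool} (h : supp v = supp w) : v = w := by
  funext i
  have := Finset.ext_iff.mp h i
  simp [mem_supp] at this
  cases hv : v i <;> cases hw : w i <;> simp [hv, hw] at this ⊢

lemma supp_pairVec {m : ℕ} (a b : Fin m) : supp (pairVec a b) = {a, b} := by
  ext x; simp [mem_supp, pairVec, or_comm]

lemma pairVec_comm {m : ℕ} (a b : Fin m) : pairVec a b = pairVec b a := by
  funext x; simp only [pairVec, Bool.or_comm]

lemma wt_two_iff {m : ℕ} (v : Fin m → Bool) :
    wt v = 2 ↔ ∃ a b : Fin m, a ≠ b ∧ v = pairVec a b := by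
  constructor
  · intro h
    rw [wt_eq, Finset.card_eq_two] at h
    obtain ⟨a, b, hab, h⟩ := h
    exact ⟨a, b, hab, supp_inj (by rw [h, supp_pairVec])⟩
  · rintro ⟨a, b, hab, rfl⟩
    rw [wt_eq, supp_pairVec, card_insert_of_notMem (by simp [hab]), card_singleton]

lemma hamDist_le_one_iff {m : ℕ} {v w : Fin m → Bool} (hv : wt v = 2) (hw : wt w = 3) :
    hamDist v w ≤ 1 ↔ supp v ⊆ supp w := by
  have hd : hamDist v w = (supp v \ supp w).card + (supp w \ supp v).card := by
    rw [← card_union_of_disjoint (disjoint_sdiff_sdiff)]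
    unfold hamDist
    congr 1
    ext i
    simp only [mem_union, mem_sdiff, mem_supp, hamDist, mem_filter, mem_univ, true_and]
    cases v i <;> cases w i <;> simp
  have h1 : (supp v \ supp w).card + (supp v ∩ supp w).card = (supp v).card :=
    card_sdiff_add_card_inter _ _
  have h2 : (supp w \ supp v).card + (supp w ∩ supp v).card = (supp w).card :=
    card_sdiff_add_card_inter _ _
  have hi : (supp v ∩ supp w).card = (supp w ∩ supp v).card := by rw [inter_comm]
  rw [wt_eq] at hv hw
  have hsub : supp v ⊆ supp w ↔ (supp v \ supp w).card = 0 := by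
    rw [Finset.card_eq_zero, Finset.sdiff_eq_empty_iff_subset]
  rw [hd, hsub]
  omega

lemma wt_pairVec {m : ℕ} {a b : Fin m} (hab : a ≠ b) : wt (pairVec a b) = 2 :=
  (wt_two_iff _).2 ⟨a, b, hab, rfl⟩

def tripleVec {m : ℕ} (a b c : Fin m) : Fin m → Bool :=
  fun x => decide (x = a) || decide (x = b) || decide (x = c)

lemma supp_tripleVec {m : ℕ} (a b c : Fin m) : supp (tripleVec a b c) = {a, b, c} := by
  ext x; simp [mem_supp, tripleVec]; tauto

lemma wt_tripleVec {m : ℕ} {a b c : Fin m} (hab : a ≠ b) (hac : a ≠ c) (hbc : b ≠ c) :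
    wt (tripleVec a b c) = 3 := by
  rw [wt_eq, supp_tripleVec]
  rw [card_insert_of_notMem (by simp [hab, hac]),
    card_insert_of_notMem (by simp [hbc]), card_singleton]

lemma subset_triple {m : ℕ} {v : Fin m → Bool} (hv : wt v = 2) {a b c : Fin m}
    (h : supp v ⊆ {a, b, c}) :
    v = pairVec a b ∨ v = pairVec a c ∨ v = pairVec b c := by
  obtain ⟨x, y, hxy, rfl⟩ := (wt_two_iff v).1 hv
  rw [supp_pairVec] at h
  have hx : x ∈ ({a, b, c} : Finset (Fin m)) := h (by simp)
  have hy : y ∈ ({a, b, c} : Finset (Fin m)) := h (by simp)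
  simp only [mem_insert, mem_singleton] at hx hy
  rcases hx with rfl | rfl | rfl <;> rcases hy with rfl | rfl | rfl <;>
    first
      | exact absurd rfl hxy
      | exact Or.inl rfl
      | exact Or.inr (Or.inl rfl)
      | exact Or.inr (Or.inr rfl)
      | exact Or.inl (pairVec_comm _ _)
      | exact Or.inr (Or.inl (pairVec_comm _ _))
      | exact Or.inr (Or.inr (pairVec_comm _ _))

lemma cover_iff {m : ℕ} (A : Finset (Fin m → Bool)) (hA : ∀ v ∈ A, wt v = 2) :
    (∀ w : Fin m → Bool, wt w = 3 → ∃ v ∈ A, hamDist v w ≤ 1) ↔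
    (∀ a b c : Fin m, a ≠ b → a ≠ c → b ≠ c →
      pairVec a b ∈ A ∨ pairVec a c ∈ A ∨ pairVec b c ∈ A) := by
  constructor
  · intro h a b c hab hac hbc
    obtain ⟨v, hvA, hd⟩ := h (tripleVec a b c) (wt_tripleVec hab hac hbc)
    have hsub : supp v ⊆ {a, b, c} := by
      rw [← supp_tripleVec a b c]
      exact (hamDist_le_one_iff (hA v hvA) (wt_tripleVec hab hac hbc)).1 hd
    rcases subset_triple (hA v hvA) hsub with rfl | rfl | rfl
    · exact Or.inl hvA
    · exact Or.inr (Or.inl hvA)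
    · exact Or.inr (Or.inr hvA)
  · intro h w hw
    obtain ⟨a, b, c, hab, hac, hbc, hs⟩ := Finset.card_eq_three.1 (wt_eq w ▸ hw)
    have key : ∀ x y : Fin m, x ≠ y → x ∈ supp w → y ∈ supp w →
        pairVec x y ∈ A → ∃ v ∈ A, hamDist v w ≤ 1 := by
      intro x y hxy hxw hyw hmem
      refine ⟨pairVec x y, hmem, (hamDist_le_one_iff (wt_pairVec hxy) hw).2 ?_⟩
      rw [supp_pairVec]
      intro z hz
      simp only [mem_insert, mem_singleton] at hz
      rcases hz with rfl | rfl <;> assumption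
    have ha : a ∈ supp w := by rw [hs]; simp
    have hb : b ∈ supp w := by rw [hs]; simp
    have hc : c ∈ supp w := by rw [hs]; simp
    rcases h a b c hab hac hbc with hm | hm | hm
    · exact key a b hab ha hb hm
    · exact key a c hac ha hc hm
    · exact key b c hbc hb hc hm

lemma count3 {α : Type*} [DecidableEq α] {u v w : α} (huv : u ≠ v) (huw : u ≠ w)
    (hvw : v ≠ w) (p : α → Bool) :
    (({u, v, w} : Finset α).filter (fun x => p x = true)).card =
      (if p u then 1 else 0) + (if p v then 1 else 0) + (if p w then 1 else 0) := by
  rw [filter_insert, filter_insert, filter_singleton]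
  cases hu : p u <;> cases hv : p v <;> cases hw : p w <;>
    simp_all [card_insert_of_notMem]

lemma pairVec_eval_left {m : ℕ} (a b : Fin m) : pairVec a b a = true := by simp [pairVec]
lemma pairVec_eval_right {m : ℕ} (a b : Fin m) : pairVec a b b = true := by simp [pairVec]
lemma pairVec_eval_ne {m : ℕ} {a b x : Fin m} (hxa : x ≠ a) (hxb : x ≠ b) :
    pairVec a b x = false := by simp [pairVec, hxa, hxb]

lemma mem_supp_pair {m : ℕ} {v : Fin m → Bool} (h2 : wt v = 2) {x y : Fin m}
    (hx : x ∈ supp v) (hy : y ∈ supp v) (hxy : x ≠ y) : v = pairVec x y := by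
  apply supp_inj
  rw [supp_pairVec]
  refine (Finset.eq_of_subset_of_card_le ?_ ?_).symm
  · intro z hz
    simp only [mem_insert, mem_singleton] at hz
    rcases hz with rfl | rfl <;> assumption
  · rw [card_insert_of_notMem (by simp [hxy]), card_singleton, ← wt_eq, h2]

lemma triangle_aux {m : ℕ} {u v w : Fin m → Bool} (huv : u ≠ v) (huw : u ≠ w) (hvw : v ≠ w)
    (h2v : wt v = 2) (h2w : wt w = 2)
    (hcnt : ∀ i : Fin m,
      (({u, v, w} : Finset (Fin m → Bool)).filter (fun p => p i = true)).card ≠ 1)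
    {a b : Fin m} (hab : a ≠ b) (hu : u = pairVec a b) (hva : v a = true) :
    ∃ x y z : Fin m, x ≠ y ∧ x ≠ z ∧ y ≠ z ∧
      pairVec x y ∈ ({u, v, w} : Finset (Fin m → Bool)) ∧
      pairVec x z ∈ ({u, v, w} : Finset (Fin m → Bool)) ∧
      pairVec y z ∈ ({u, v, w} : Finset (Fin m → Bool)) := by
  -- v = pairVec a c for some c ≠ a
  obtain ⟨c, hca, hv⟩ : ∃ c : Fin m, c ≠ a ∧ v = pairVec a c := by
    obtain ⟨x, y, hxy, rfl⟩ := (wt_two_iff v).1 h2v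
    simp only [pairVec, Bool.or_eq_true, decide_eq_true_eq] at hva
    rcases hva with rfl | rfl
    · exact ⟨y, fun h => hxy h.symm, rfl⟩
    · exact ⟨x, fun h => hxy h, pairVec_comm x a⟩
  have hcb : c ≠ b := by
    rintro rfl
    exact huv (hu.trans hv.symm)
  -- w b = true
  have hwb : w b = true := by
    have := hcnt b
    rw [count3 huv huw hvw] at this
    rw [hu, hv] at this
    rw [pairVec_eval_right] at this
    rw [pairVec_eval_ne (Ne.symm hab) (Ne.symm hcb)] at this
    cases hwb : w b
    · rw [hwb] at this; simp at this
    · rfl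
  -- w c = true
  have hwc : w c = true := by
    have := hcnt c
    rw [count3 huv huw hvw] at this
    rw [hu, hv] at this
    rw [pairVec_eval_ne hca hcb, pairVec_eval_right] at this
    cases hwcc : w c
    · rw [hwcc] at this; simp at this
    · rfl
  have hbc : b ≠ c := Ne.symm hcb
  have hw : w = pairVec b c :=
    mem_supp_pair h2w ((mem_supp w b).2 hwb) ((mem_supp w c).2 hwc) hbc
  exact ⟨a, b, c, hab, Ne.symm hca, hbc,
    by rw [← hu]; simp, by rw [← hv]; simp, by rw [← hw]; simp⟩

lemma triangle_of_no_single {m : ℕ} {u v w : Fin m → Bool} (huv : u ≠ v) (huw : u ≠ w)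
    (hvw : v ≠ w) (h2u : wt u = 2) (h2v : wt v = 2) (h2w : wt w = 2)
    (hcnt : ∀ i : Fin m,
      (({u, v, w} : Finset (Fin m → Bool)).filter (fun p => p i = true)).card ≠ 1) :
    ∃ x y z : Fin m, x ≠ y ∧ x ≠ z ∧ y ≠ z ∧
      pairVec x y ∈ ({u, v, w} : Finset (Fin m → Bool)) ∧
      pairVec x z ∈ ({u, v, w} : Finset (Fin m → Bool)) ∧
      pairVec y z ∈ ({u, v, w} : Finset (Fin m → Bool)) := by
  obtain ⟨a, b, hab, hu⟩ := (wt_two_iff u).1 h2u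
  have hor : v a = true ∨ w a = true := by
    have := hcnt a
    rw [count3 huv huw hvw, hu, pairVec_eval_left] at this
    cases hva : v a
    · cases hwa : w a
      · rw [hva, hwa] at this; simp at this
      · exact Or.inr rfl
    · exact Or.inl rfl
  rcases hor with hva | hwa
  · exact triangle_aux huv huw hvw h2v h2w hcnt hab hu hva
  · have hset : ({u, v, w} : Finset (Fin m → Bool)) = {u, w, v} := by
      ext x; simp only [mem_insert, mem_singleton]; tauto
    rw [hset] at hcnt ⊢
    exact triangle_aux huw huv (Ne.symm hvw) h2w h2v hcnt hab hu hwa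

lemma pairVec_ne {m : ℕ} {a b c d : Fin m} (hab : a ≠ b)
    (h : c ∉ ({a, b} : Finset (Fin m)) ∨ d ∉ ({a, b} : Finset (Fin m))) :
    pairVec a b ≠ pairVec c d := by
  intro he
  have : ({a, b} : Finset (Fin m)) = {c, d} := by
    rw [← supp_pairVec, ← supp_pairVec, he]
  rcases h with h | h <;> [exact h (this ▸ by simp); exact h (this ▸ by simp)]

lemma decode_iff {m : ℕ} (cols : Finset (Fin m → Bool)) (hw2 : ∀ v ∈ cols, wt v = 2) :
    (∀ S ⊆ cols, S.Nonempty → S.card ≤ 3 →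
        ∃ i : Fin m, (S.filter (fun v => v i = true)).card = 1) ↔
      ∀ a b c : Fin m, a ≠ b → a ≠ c → b ≠ c →
        ¬(pairVec a b ∈ cols ∧ pairVec a c ∈ cols ∧ pairVec b c ∈ cols) := by
  constructor
  · intro h a b c hab hac hbc ⟨m1, m2, m3⟩
    have e1 : pairVec a b ≠ pairVec a c :=
      pairVec_ne hab (Or.inr (by simp [Ne.symm hac, Ne.symm hbc]))
    have e2 : pairVec a b ≠ pairVec b c :=
      pairVec_ne hab (Or.inr (by simp [Ne.symm hac, Ne.symm hbc]))
    have e3 : pairVec a c ≠ pairVec b c :=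
      pairVec_ne hac (Or.inl (by simp [Ne.symm hab, hbc]))
    have hsub : ({pairVec a b, pairVec a c, pairVec b c} : Finset (Fin m → Bool)) ⊆ cols := by
      intro x hx; simp only [mem_insert, mem_singleton] at hx
      rcases hx with rfl | rfl | rfl <;> assumption
    have hcard : ({pairVec a b, pairVec a c, pairVec b c} : Finset (Fin m → Bool)).card ≤ 3 := by
      apply le_trans (card_insert_le _ _)
      simp [card_insert_le]
      exact lt_of_le_of_lt (card_insert_le _ _) (by simp)
    obtain ⟨i, hi⟩ := h _ hsub (insert_nonempty _ _) hcard
    rw [count3 e1 e2 e3] at hi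
    by_cases h1 : i = a
    · subst h1
      rw [pairVec_eval_left, pairVec_eval_left, pairVec_eval_ne hab hac] at hi
      simp at hi
    by_cases h2 : i = b
    · subst h2
      rw [pairVec_eval_right, pairVec_eval_ne (Ne.symm hab) hbc, pairVec_eval_left] at hi
      simp at hi
    by_cases h3 : i = c
    · subst h3
      rw [pairVec_eval_ne (Ne.symm hac) (Ne.symm hbc), pairVec_eval_right,
        pairVec_eval_right] at hi
      simp at hi
    · rw [pairVec_eval_ne h1 h2, pairVec_eval_ne h1 h3, pairVec_eval_ne h2 h3] at hi
      simp at hi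
  · intro h S hSc hSne hS3
    by_contra hno
    push_neg at hno
    have h1 : 1 ≤ S.card := Finset.card_pos.2 hSne
    interval_cases hc : S.card
    · obtain ⟨x, rfl⟩ := Finset.card_eq_one.1 hc
      have hx : x ∈ cols := hSc (by simp)
      have : (supp x).Nonempty := by
        rw [← Finset.card_pos, ← wt_eq, hw2 x hx]; norm_num
      obtain ⟨i, hi⟩ := this
      apply hno i
      rw [filter_singleton, if_pos ((mem_supp x i).1 hi), card_singleton]
    · obtain ⟨x, y, hxy, rfl⟩ := Finset.card_eq_two.1 hc
      have hx : x ∈ cols := hSc (by simp)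
      have hy : y ∈ cols := hSc (by simp)
      obtain ⟨i, hi, hiy⟩ : ∃ i, i ∈ supp x ∧ i ∉ supp y := by
        by_contra hcon
        push_neg at hcon
        exact hxy (supp_inj (Finset.eq_of_subset_of_card_le hcon
          (by rw [← wt_eq, ← wt_eq, hw2 x hx, hw2 y hy])))
      apply hno i
      rw [filter_insert, if_pos ((mem_supp x i).1 hi), filter_singleton,
        if_neg (fun hh => hiy ((mem_supp y i).2 hh))]
      simp
    · obtain ⟨x, y, z, hxy, hxz, hyz, rfl⟩ := Finset.card_eq_three.1 hc
      have hx : x ∈ cols := hSc (by simp)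
      have hy : y ∈ cols := hSc (by simp)
      have hz : z ∈ cols := hSc (by simp)
      obtain ⟨p, q, r, hpq, hpr, hqr, hm1, hm2, hm3⟩ :=
        triangle_of_no_single hxy hxz hyz (hw2 x hx) (hw2 y hy) (hw2 z hz) hno
      exact h p q r hpq hpr hqr ⟨hSc hm1, hSc hm2, hSc hm3⟩

def allPairs (m : ℕ) : Finset (Fin m → Bool) := univ.filter (fun v => wt v = 2)

lemma mem_allPairs {m : ℕ} (v : Fin m → Bool) : v ∈ allPairs m ↔ wt v = 2 := by
  simp [allPairs]

lemma card_allPairs (m : ℕ) : (allPairs m).card = m.choose 2 := by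
  have : (allPairs m).card = ((univ : Finset (Fin m)).powersetCard 2).card := by
    apply Finset.card_bij (fun v _ => supp v)
    · intro v hv
      rw [mem_powersetCard]
      exact ⟨subset_univ _, by rw [← wt_eq]; exact (mem_allPairs v).1 hv⟩
    · intro v _ w _ h
      exact supp_inj h
    · intro s hs
      rw [mem_powersetCard] at hs
      refine ⟨fun i => decide (i ∈ s), ?_, ?_⟩
      · rw [mem_allPairs, wt_eq]
        have : supp (fun i => decide (i ∈ s)) = s := by ext x; simp [mem_supp]
        rw [this, hs.2]
      · ext x; simp [mem_supp]
  rw [this, Finset.card_powersetCard, card_univ, Fintype.card_fin]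

/-- The set defining `turanK` is nonempty, so its infimum is attained. -/
lemma turanK_attained (m : ℕ) : ∃ A : Finset (Fin m → Bool), A.card = turanK m ∧
    (∀ v ∈ A, wt v = 2) ∧ ∀ w : Fin m → Bool, wt w = 3 → ∃ v ∈ A, hamDist v w ≤ 1 := by
  have hne : {c | ∃ A : Finset (Fin m → Bool), A.card = c ∧ (∀ v ∈ A, wt v = 2) ∧
      ∀ w : Fin m → Bool, wt w = 3 → ∃ v ∈ A, hamDist v w ≤ 1}.Nonempty := by
    refine ⟨(allPairs m).card, allPairs m, rfl, fun v hv => (mem_allPairs v).1 hv, ?_⟩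
    rw [cover_iff _ (fun v hv => (mem_allPairs v).1 hv)]
    intro a b c hab _ _
    exact Or.inl ((mem_allPairs _).2 (wt_pairVec hab))
  obtain ⟨A, hA⟩ := Nat.sInf_mem hne
  exact ⟨A, hA⟩

lemma turanK_le {m : ℕ} {A : Finset (Fin m → Bool)} (h2 : ∀ v ∈ A, wt v = 2)
    (hcov : ∀ w : Fin m → Bool, wt w = 3 → ∃ v ∈ A, hamDist v w ≤ 1) :
    turanK m ≤ A.card :=
  Nat.sInf_le ⟨A, rfl, h2, hcov⟩

/-- A triangle-free family of weight-2 vectors forces the bound. -/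
lemma tf_bound {m n : ℕ} {cols : Finset (Fin m → Bool)} (hcard : cols.card = n)
    (h2 : ∀ v ∈ cols, wt v = 2)
    (htf : ∀ a b c : Fin m, a ≠ b → a ≠ c → b ≠ c →
      ¬(pairVec a b ∈ cols ∧ pairVec a c ∈ cols ∧ pairVec b c ∈ cols)) :
    n ≤ m.choose 2 - turanK m := by
  set A := allPairs m \ cols with hA
  have hA2 : ∀ v ∈ A, wt v = 2 := fun v hv => (mem_allPairs v).1 (mem_sdiff.1 hv).1
  have hcov : ∀ w : Fin m → Bool, wt w = 3 → ∃ v ∈ A, hamDist v w ≤ 1 := by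
    rw [cover_iff _ hA2]
    intro a b c hab hac hbc
    have := htf a b c hab hac hbc
    by_cases h1 : pairVec a b ∈ cols
    · by_cases h2' : pairVec a c ∈ cols
      · have h3 : pairVec b c ∉ cols := fun h3 => this ⟨h1, h2', h3⟩
        exact Or.inr (Or.inr (mem_sdiff.2 ⟨(mem_allPairs _).2 (wt_pairVec hbc), h3⟩))
      · exact Or.inr (Or.inl (mem_sdiff.2 ⟨(mem_allPairs _).2 (wt_pairVec hac), h2'⟩))
    · exact Or.inl (mem_sdiff.2 ⟨(mem_allPairs _).2 (wt_pairVec hab), h1⟩)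
  have hle : turanK m ≤ A.card := turanK_le hA2 hcov
  have hsub : cols ⊆ allPairs m := fun v hv => (mem_allPairs v).2 (h2 v hv)
  have hAcard : A.card = m.choose 2 - n := by
    rw [hA, card_sdiff_of_subset hsub, card_allPairs, hcard]
  have hn' : n ≤ m.choose 2 := by
    rw [← hcard, ← card_allPairs m]; exact card_le_card hsub
  omega

/-- Conversely, the bound gives a triangle-free family of any size `n`. -/
lemma tf_exists {m n : ℕ} (h : n ≤ m.choose 2 - turanK m) :
    ∃ cols : Finset (Fin m → Bool), cols.card = n ∧ (∀ v ∈ cols, wt v = 2) ∧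
      ∀ a b c : Fin m, a ≠ b → a ≠ c → b ≠ c →
        ¬(pairVec a b ∈ cols ∧ pairVec a c ∈ cols ∧ pairVec b c ∈ cols) := by
  obtain ⟨A, hAcard, hA2, hAcov⟩ := turanK_attained m
  set B := allPairs m \ A with hB
  have hAsub : A ⊆ allPairs m := fun v hv => (mem_allPairs v).2 (hA2 v hv)
  have hBcard : B.card = m.choose 2 - turanK m := by
    rw [hB, card_sdiff_of_subset hAsub, card_allPairs, hAcard]
  obtain ⟨cols, hsub, hcard⟩ := Finset.exists_subset_card_eq (hBcard ▸ h : n ≤ B.card)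
  refine ⟨cols, hcard, ?_, ?_⟩
  · intro v hv
    exact (mem_allPairs v).1 (mem_sdiff.1 (hsub hv)).1
  · intro a b c hab hac hbc ⟨m1, m2, m3⟩
    rcases (cover_iff A hA2).1 hAcov a b c hab hac hbc with hin | hin | hin
    · exact (mem_sdiff.1 (hsub m1)).2 hin
    · exact (mem_sdiff.1 (hsub m2)).2 hin
    · exact (mem_sdiff.1 (hsub m3)).2 hin

lemma matrix_to_bound {m n : ℕ} (M : Fin m → Fin n → Bool) (hM : IsDecodableK M 3 2) :
    n ≤ m.choose 2 - turanK m := by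
  obtain ⟨hdec, hcol⟩ := hM
  set f : Fin n → (Fin m → Bool) := fun j i => M i j with hf
  have hwt : ∀ j, wt (f j) = 2 := fun j => hcol j
  have hinj : Function.Injective f := by
    intro j j' he
    by_contra hne
    obtain ⟨i, hi⟩ := hdec {j, j'} (insert_nonempty _ _) (le_trans (card_insert_le _ _) (by simp))
    rw [filter_insert, filter_singleton] at hi
    have hMe : M i j = M i j' := congrFun he i
    cases hj : M i j
    · rw [if_neg (by simp [hj]), if_neg (by simp [← hMe, hj])] at hi
      simp at hi
    · rw [if_pos hj, if_pos (by rw [← hMe, hj]),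
        card_insert_of_notMem (by simp [hne])] at hi
      simp at hi
  set cols : Finset (Fin m → Bool) := univ.image f with hcols
  have hcard : cols.card = n := by
    rw [hcols, card_image_of_injective _ hinj, card_univ, Fintype.card_fin]
  have h2 : ∀ v ∈ cols, wt v = 2 := by
    intro v hv
    obtain ⟨j, _, rfl⟩ := Finset.mem_image.1 hv
    exact hwt j
  refine tf_bound hcard h2 ?_
  rw [← decode_iff cols h2]
  intro S hSsub hSne hS3
  set S' : Finset (Fin n) := univ.filter (fun j => f j ∈ S) with hS'
  have himg : S'.image f = S := by
    apply Finset.Subset.antisymm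
    · intro x hx
      obtain ⟨j, hj, rfl⟩ := Finset.mem_image.1 hx
      exact (mem_filter.1 hj).2
    · intro x hx
      obtain ⟨j, _, rfl⟩ := Finset.mem_image.1 (hSsub hx)
      exact Finset.mem_image.2 ⟨j, by simp [hS', hx], rfl⟩
  have hS'card : S'.card = S.card := by
    rw [← himg, card_image_of_injective _ hinj]
  have hS'ne : S'.Nonempty := by
    rw [← Finset.card_pos, hS'card]
    exact Finset.card_pos.2 hSne
  obtain ⟨i, hi⟩ := hdec S' hS'ne (hS'card ▸ hS3)
  refine ⟨i, ?_⟩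
  rw [← himg, Finset.filter_image, card_image_of_injective _ hinj]
  exact hi

lemma bound_to_matrix {m n : ℕ} (h : n ≤ m.choose 2 - turanK m) :
    ∃ M : Fin m → Fin n → Bool, IsDecodableK M 3 2 := by
  obtain ⟨cols, hcard, h2, htf⟩ := tf_exists h
  set g : Fin cols.card → {x // x ∈ cols} := fun i => cols.equivFin.symm i with hg
  set f : Fin n → (Fin m → Bool) := fun j => (g (Fin.cast hcard.symm j) : Fin m → Bool) with hf
  have hmem : ∀ j, f j ∈ cols := fun j => (g (Fin.cast hcard.symm j)).2
  have hinj : Function.Injective f := by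
    intro j j' he
    have : g (Fin.cast hcard.symm j) = g (Fin.cast hcard.symm j') := Subtype.ext he
    have := cols.equivFin.symm.injective this
    exact Fin.cast_injective _ this
  refine ⟨fun i j => f j i, ?_, fun j => h2 _ (hmem j)⟩
  intro S hSne hS3
  set T : Finset (Fin m → Bool) := S.image f with hT
  have hTsub : T ⊆ cols := by
    intro x hx
    obtain ⟨j, _, rfl⟩ := Finset.mem_image.1 hx
    exact hmem j
  have hTcard : T.card = S.card := card_image_of_injective _ hinj
  obtain ⟨i, hi⟩ := (decode_iff cols h2).2 htf T hTsub
    (hSne.image f) (hTcard ▸ hS3)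
  refine ⟨i, ?_⟩
  rw [hT, Finset.filter_image, card_image_of_injective _ hinj] at hi
  exact hi

theorem mStarK_three_two (n : ℕ) (hn : 1 ≤ n) :
    mStarK n 3 2 = sInf {m : ℕ | n ≤ Nat.choose m 2 - turanK m} ∧
    (∀ m : ℕ, ∀ cols : Finset (Fin m → Bool), (∀ v ∈ cols, wt v = 2) →
      ((∀ S ⊆ cols, S.Nonempty → S.card ≤ 3 →
          ∃ i : Fin m, (S.filter (fun v => v i = true)).card = 1) ↔
        ∀ a b c : Fin m, a ≠ b → a ≠ c → b ≠ c →
          ¬(pairVec a b ∈ cols ∧ pairVec a c ∈ cols ∧ pairVec b c ∈ cols))) := by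
  constructor
  · unfold mStarK
    congr 1
    ext m
    simp only [Set.mem_setOf_eq]
    exact ⟨fun ⟨M, hM⟩ => matrix_to_bound M hM, bound_to_matrix⟩
  · intro m cols h2
    exact decode_iff cols h2
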